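/- Under the assumption that every structure in the multiverse has an infinitely generic extension, every infinitely generic structure is Π₂-complete in the multiverse: every Π₂-sentence with parameters in N that holds in some extension N' ≤ N also holds in N. -/
import Mathlib


namespace Robinson

/-- Formulas built from atoms (which may carry parameters), with conjunction,
disjunction, negation and an existential quantifier whose witnesses range over
a fixed type `W` of potential parameters/elements. -/
inductive Frm (atom : Type) (W : Type) : Type
  | atm : atom → Frm atom W
  | and : Frm atom W → Frm atom W → Frm atom W
  | or  : Frm atom W → Frm atom W → Frm atom W
  | not : Frm atom W → Frm atom W
  | ex  : (W → Frm atom W) → Frm atom W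

/-- A multiverse: a preorder of structures, `le Q N` meaning `Q` extends `N`
(`N` is a substructure of `Q`).  `mem a N` says the element `a` belongs to the
domain of `N` (so elements persist to extensions), and atomic sentences with
parameters in `N` are absolute between `N` and its extensions. -/
structure Multiverse (atom : Type) (W : Type) : Type 1 where
  M : Type
  le : M → M → Prop
  le_refl : ∀ N, le N N
  le_trans : ∀ {P Q R}, le P Q → le Q R → le P R
  satAtom : M → atom → Prop
  mem : W → M → Prop
  mem_mono : ∀ {a : W} {N Q : M}, le Q N → mem a N → mem a Q
  atom_absolute : ∀ {N Q : M} (p : atom), le Q N → (satAtom N p ↔ satAtom Q p)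

variable {atom W : Type}

/-- Robinson's infinite forcing relation on the multiverse. -/
def Forces (V : Multiverse atom W) : Frm atom W → V.M → Prop
  | .atm p, N => V.satAtom N p
  | .and φ ψ, N => Forces V φ N ∧ Forces V ψ N
  | .or φ ψ, N => Forces V φ N ∨ Forces V ψ N
  | .not φ, N => ∀ Q : V.M, V.le Q N → ¬ Forces V φ Q
  | .ex f, N => ∃ a : W, V.mem a N ∧ Forces V (f a) N

/-- Tarskian satisfaction. -/
def Sat (V : Multiverse atom W) : Frm atom W → V.M → Prop
  | .atm p, N => V.satAtom N p
  | .and φ ψ, N => Sat V φ N ∧ Sat V ψ N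
  | .or φ ψ, N => Sat V φ N ∨ Sat V ψ N
  | .not φ, N => ¬ Sat V φ N
  | .ex f, N => ∃ a : W, V.mem a N ∧ Sat V (f a) N

/-- `N` is infinitely generic: it forces every sentence or its negation. -/
def Generic (V : Multiverse atom W) (N : V.M) : Prop :=
  ∀ φ : Frm atom W, Forces V φ N ∨ Forces V (Frm.not φ) N

end Robinson


namespace Robinson

variable {atom W : Type}

/-- Quantifier-free formulas. -/
inductive QF : Frm atom W → Prop
  | atm (p : atom) : QF (.atm p)
  | and {φ ψ} : QF φ → QF ψ → QF (.and φ ψ)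
  | or {φ ψ} : QF φ → QF ψ → QF (.or φ ψ)
  | not {φ} : QF φ → QF (.not φ)

/-- Σ₁ (existential) formulas: existential quantifiers over a quantifier-free matrix. -/
inductive Sigma1 : Frm atom W → Prop
  | of_qf {φ} : QF φ → Sigma1 φ
  | ex {f : W → Frm atom W} : (∀ a, Sigma1 (f a)) → Sigma1 (.ex f)

/-- The universal quantifier, as the abbreviation `¬∃x¬`. -/
def Frm.all (f : W → Frm atom W) : Frm atom W :=
  .not (.ex fun a => .not (f a))

/-- Π₂ formulas: universally quantified Σ₁ formulas. -/
inductive Pi2 : Frm atom W → Prop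
  | of_sigma1 {φ} : Sigma1 φ → Pi2 φ
  | all {f : W → Frm atom W} : (∀ a, Pi2 (f a)) → Pi2 (Frm.all f)

end Robinson

namespace Robinson

/-- For an infinitely generic structure, forcing coincides with truth. -/
theorem sat_iff_forces {atom W : Type} (V : Multiverse atom W) {N : V.M}
    (hg : Generic V N) : ∀ φ : Frm atom W, Sat V φ N ↔ Forces V φ N := by
  intro φ
  induction φ with
  | atm p => exact Iff.rfl
  | and φ ψ ihφ ihψ => exact and_congr ihφ ihψ
  | or φ ψ ihφ ihψ => exact or_congr ihφ ihψ
  | not φ ihφ =>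
    constructor
    · intro hns
      rcases hg φ with hf | hnf
      · exact absurd (ihφ.mpr hf) hns
      · exact hnf
    · intro hnf hs
      exact hnf N (V.le_refl N) (ihφ.mp hs)
  | ex f ih =>
    exact exists_congr fun a => and_congr_right fun _ => ih a

/-- Quantifier-free formulas are absolute between a structure and its extensions. -/
theorem qf_absolute {atom W : Type} (V : Multiverse atom W) {φ : Frm atom W}
    (hqf : QF φ) : ∀ {N Q : V.M}, V.le Q N → (Sat V φ N ↔ Sat V φ Q) := by
  induction hqf with
  | atm p => exact fun h => V.atom_absolute p h
  | and h1 h2 ih1 ih2 => exact fun h => and_congr (ih1 h) (ih2 h)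
  | or h1 h2 ih1 ih2 => exact fun h => or_congr (ih1 h) (ih2 h)
  | not h1 ih1 => exact fun h => not_congr (ih1 h)

/-- Σ₁ formulas persist upward to extensions. -/
theorem sigma1_persist {atom W : Type} (V : Multiverse atom W) {φ : Frm atom W}
    (hs : Sigma1 φ) : ∀ {N Q : V.M}, V.le Q N → Sat V φ N → Sat V φ Q := by
  induction hs with
  | of_qf hqf => exact fun h hsat => (qf_absolute V hqf h).mp hsat
  | ex hf ih =>
    intro N Q h hsat
    rcases hsat with ⟨a, ha, hfa⟩
    exact ⟨a, V.mem_mono h ha, ih a h hfa⟩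

/-- Existential completeness of generic structures. -/
theorem generic_sigma1_complete {atom W : Type} (V : Multiverse atom W)
    (hdense : ∀ P : V.M, ∃ Q : V.M, V.le Q P ∧ Generic V Q)
    {N : V.M} (hg : Generic V N) {φ : Frm atom W} (hs : Sigma1 φ)
    {N' : V.M} (hle : V.le N' N) (h : Sat V φ N') : Sat V φ N := by
  by_contra hns
  have hforce : Forces V (Frm.not φ) N := by
    rcases hg φ with hf | hnf
    · exact absurd ((sat_iff_forces V hg φ).mpr hf) hns
    · exact hnf
  rcases hdense N' with ⟨Q, hQle, hQg⟩
  have hQN : V.le Q N := V.le_trans hQle hle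
  have : Sat V φ Q := sigma1_persist V hs hQle h
  exact hforce Q hQN ((sat_iff_forces V hQg φ).mp this)

/-- If every structure has an infinitely generic extension, every infinitely generic
structure is Pi2-complete in the multiverse. -/
theorem generic_pi2_complete {atom W : Type} (V : Multiverse atom W)
    (hdense : ∀ P : V.M, ∃ Q : V.M, V.le Q P ∧ Generic V Q)
    {N : V.M} (hg : Generic V N)
    (phi : Frm atom W) (hpi : Pi2 phi)
    {N' : V.M} (hle : V.le N' N) (h : Sat V phi N') :
    Sat V phi N := by
  induction hpi generalizing N' with
  | of_sigma1 hs => exact generic_sigma1_complete V hdense hg hs hle h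
  | @all f hf ih =>
    rintro ⟨a, ha, hna⟩
    have hN' : Sat V (f a) N' := by
      by_contra hc
      exact h ⟨a, V.mem_mono hle ha, hc⟩
    exact hna (ih a hle hN')
end Robinson
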